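/- Let n ≥ 1 and α ∈ (0, 1) be such that k := ⌈(n+1)(1-α)⌉ ≤ n. Let S̃_1, …, S̃_n, S' be real random variables whose joint law is exchangeable, and let s* be the k-th order statistic of (S̃_1, …, S̃_n). Then P(S' ≤ s*) ≥ 1 - α. -/

import Mathlib

open MeasureTheory

/-- The `k`-th order statistic (1-indexed, counting multiplicity) of a tuple of reals,
with junk value `0` if `k` is out of range. -/
noncomputable def orderStat {n : ℕ} (p : Fin n → ℝ) (k : ℕ) : ℝ :=
  (Multiset.sort (Multiset.map p Finset.univ.val) (· ≤ ·)).getD (k - 1) 0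

open ENNReal

theorem memtake (l : List ℝ) (k : ℕ) (h : k - 1 < l.length) (hk : 1 ≤ k) : l[k-1] ∈ l.take k := by
  rw [List.getElem_take' h (Nat.sub_lt hk one_pos)]
  exact List.getElem_mem _

theorem L1 (l : List ℝ) (hs : l.Pairwise (· ≤ ·)) (k : ℕ) (hk1 : 1 ≤ k) (hk : k ≤ l.length) :
    l.countP (fun x => decide (x < l.getD (k-1) 0)) < k := by
  have hm : k - 1 < l.length := lt_of_lt_of_le (Nat.sub_lt hk1 one_pos) hk
  set v := l.getD (k-1) 0 with hv
  have hvg : v = l[k-1] := by rw [hv, l.getD_eq_getElem]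
  have hvmem : v ∈ l.take k := hvg ▸ memtake l k hm hk1
  conv_lhs => rw [← l.take_append_drop k, List.countP_append]
  have hdrop : (l.drop k).countP (fun x => decide (x < v)) = 0 := by
    rw [List.countP_eq_zero]
    intro x hx
    simp only [decide_eq_true_eq, not_lt]
    exact hs.rel_of_mem_take_of_mem_drop hvmem hx
  rw [hdrop, Nat.add_zero]
  have hcnt : (l.take k).countP (fun x => decide (x < v)) < (l.take k).length := by
    refine lt_of_le_of_ne (List.countP_le_length) ?_
    intro hEq
    have := (List.countP_eq_length.mp hEq) v hvmem
    simp at this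
  calc (l.take k).countP (fun x => decide (x < v)) < (l.take k).length := hcnt
    _ ≤ k := by simp [List.length_take]

theorem L2 (l : List ℝ) (hs : l.Pairwise (· ≤ ·)) (k : ℕ) (hk1 : 1 ≤ k) (hk : k ≤ l.length) :
    k ≤ l.countP (fun x => decide (x ≤ l.getD (k-1) 0)) := by
  have hm : k - 1 < l.length := lt_of_lt_of_le (Nat.sub_lt hk1 one_pos) hk
  set v := l.getD (k-1) 0 with hv
  have hvg : v = l[k-1] := by rw [hv, l.getD_eq_getElem]
  have hvdrop : v ∈ l.drop (k-1) := by
    have h0 : 0 < (l.drop (k-1)).length := by simp [List.length_drop]; omega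
    have hmem := List.getElem_mem (l := l.drop (k-1)) (n := 0) h0
    rw [List.getElem_drop] at hmem
    simpa [hvg] using hmem
  have htake : (l.take k).countP (fun x => decide (x ≤ v)) = (l.take k).length := by
    rw [List.countP_eq_length]
    intro x hx
    simp only [decide_eq_true_eq]
    have hksucc : k = (k-1) + 1 := by omega
    rw [hksucc, List.take_succ] at hx
    rcases List.mem_append.mp hx with h | h
    · exact hs.rel_of_mem_take_of_mem_drop h hvdrop
    · have hx' : x = l[k-1] := by
        simpa [List.getElem?_eq_getElem hm] using h
      rw [hx', ← hvg]
  calc k = (l.take k).length := by simp [List.length_take]; omega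
    _ = (l.take k).countP (fun x => decide (x ≤ v)) := htake.symm
    _ ≤ l.countP (fun x => decide (x ≤ v)) := by
        conv_rhs => rw [← l.take_append_drop k, List.countP_append]
        omega

theorem lemA {n : ℕ} (p : Fin n → ℝ) (z' : ℝ) (k : ℕ) (hk1 : 1 ≤ k) (hkn : k ≤ n)
    (hcnt : (Finset.univ.filter fun j => p j < z').card < k) :
    z' ≤ orderStat p k := by
  by_contra hlt
  push_neg at hlt
  set l := Multiset.sort (Multiset.map p Finset.univ.val) (· ≤ ·) with hl
  have hsorted : l.Pairwise (· ≤ ·) := Multiset.pairwise_sort _ _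
  have hlen : l.length = n := by
    rw [hl, Multiset.length_sort, Multiset.card_map]; simp
  have hkl : k ≤ l.length := hlen ▸ hkn
  have hL2 := L2 l hsorted k hk1 hkl
  have hmono : l.countP (fun x => decide (x ≤ l.getD (k-1) 0)) ≤
      l.countP (fun x => decide (x < z')) := by
    apply List.countP_mono_left
    intro x _ hx
    simp only [decide_eq_true_eq] at hx ⊢
    exact lt_of_le_of_lt hx hlt
  have hcount : l.countP (fun x => decide (x < z')) =
      (Finset.univ.filter fun j => p j < z').card := by
    have h1 : (l : Multiset ℝ) = Multiset.map p Finset.univ.val := Multiset.sort_eq _ _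
    have h2 := Multiset.coe_countP (p := fun x : ℝ => x < z') l
    rw [h1, Multiset.countP_map] at h2
    rw [← h2]
    rw [show (Finset.filter (fun j => p j < z') Finset.univ).card
      = Multiset.card (Multiset.filter (fun j => p j < z') Finset.univ.val) from rfl]
  omega

theorem bridge {n : ℕ} (p : Fin n → ℝ) (pred : ℝ → Prop) [DecidablePred pred] :
    (Multiset.sort (Multiset.map p Finset.univ.val) (· ≤ ·)).countP (fun x => decide (pred x))
      = (Finset.univ.filter fun j => pred (p j)).card := by
  set l := Multiset.sort (Multiset.map p Finset.univ.val) (· ≤ ·) with hl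
  have h1 : (l : Multiset ℝ) = Multiset.map p Finset.univ.val := Multiset.sort_eq _ _
  have h2 := Multiset.coe_countP (p := pred) l
  rw [h1, Multiset.countP_map] at h2
  rw [← h2]
  rfl

theorem lemD {m : ℕ} (z : Fin m → ℝ) (k : ℕ) (hk1 : 1 ≤ k) (hkm : k ≤ m) :
    k ≤ (Finset.univ.filter fun i =>
      (Finset.univ.filter fun j => z j < z i).card < k).card := by
  set l := Multiset.sort (Multiset.map z Finset.univ.val) (· ≤ ·) with hl
  have hsorted : l.Pairwise (· ≤ ·) := Multiset.pairwise_sort _ _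
  have hlen : l.length = m := by rw [hl, Multiset.length_sort, Multiset.card_map]; simp
  have hkl : k ≤ l.length := hlen ▸ hkm
  set v := l.getD (k-1) 0 with hv
  have hL1 : l.countP (fun x => decide (x < v)) < k := L1 l hsorted k hk1 hkl
  have hL2 : k ≤ l.countP (fun x => decide (x ≤ v)) := L2 l hsorted k hk1 hkl
  have hb1 := bridge z (fun x => x < v)
  have hb2 := bridge z (fun x => x ≤ v)
  rw [← hl] at hb1 hb2
  have hsub : (Finset.univ.filter fun i => z i ≤ v) ⊆
      (Finset.univ.filter fun i => (Finset.univ.filter fun j => z j < z i).card < k) := by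
    intro i hi
    simp only [Finset.mem_filter, Finset.mem_univ, true_and] at hi ⊢
    calc (Finset.univ.filter fun j => z j < z i).card
        ≤ (Finset.univ.filter fun j => z j < v).card := by
          apply Finset.card_le_card
          intro j hj
          simp only [Finset.mem_filter, Finset.mem_univ, true_and] at hj ⊢
          exact lt_of_lt_of_le hj hi
      _ < k := by rw [← hb1]; exact hL1
  calc k ≤ (Finset.univ.filter fun i => z i ≤ v).card := by rw [← hb2]; exact hL2
    _ ≤ _ := Finset.card_le_card hsub

theorem card_filter_perm {m : ℕ} (π : Equiv.Perm (Fin m)) (P : Fin m → Prop) [DecidablePred P] :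
    (Finset.univ.filter fun j => P (π j)).card = (Finset.univ.filter P).card := by
  apply Finset.card_bij' (fun j _ => π j) (fun j _ => π.symm j) <;>
    simp [Finset.mem_filter]

theorem card_filter_castSucc {m : ℕ} (P : Fin (m+1) → Prop) [DecidablePred P]
    (hP : ¬ P (Fin.last m)) :
    (Finset.univ.filter P).card
      = (Finset.univ.filter fun j : Fin m => P (Fin.castSucc j)).card := by
  rw [Finset.card_filter, Finset.card_filter, Fin.sum_univ_castSucc]
  simp [hP]


/-- Marginal validity of MDCR: if `S̃_1, …, S̃_n, S'` (encoded as the coordinates of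
`Y : Ω → Fin (n+1) → ℝ`, with `S'` the last coordinate) are exchangeable and `s*` is the
`k`-th order statistic of `(S̃_1, …, S̃_n)` with `k = ⌈(n+1)(1-α)⌉ ≤ n`, then
`P(S' ≤ s*) ≥ 1 - α`. -/
theorem stmt9 (n : ℕ) (hn : 1 ≤ n) (α : ℝ) (hα0 : 0 < α) (hα1 : α < 1)
    (k : ℕ) (hk : k = ⌈((n : ℝ) + 1) * (1 - α)⌉₊) (hkn : k ≤ n)
    {Ω : Type*} [MeasurableSpace Ω] (μ : Measure Ω) [IsProbabilityMeasure μ]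
    (Y : Ω → Fin (n + 1) → ℝ) (hY : Measurable Y)
    (hexch : ∀ π : Equiv.Perm (Fin (n + 1)),
      Measure.map (fun ω i => Y ω (π i)) μ = Measure.map Y μ) :
    1 - α ≤ (μ {ω | Y ω (Fin.last n)
        ≤ orderStat (fun i : Fin n => Y ω (Fin.castSucc i)) k}).toReal := by
  classical
  have hk1 : 1 ≤ k := by
    rw [hk]
    rw [Nat.one_le_iff_ne_zero, ← Nat.pos_iff_ne_zero, Nat.ceil_pos]
    have h1α : (0:ℝ) < 1 - α := by linarith
    positivity
  -- the rank sets
  set A : Fin (n+1) → Set (Fin (n+1) → ℝ) := fun i =>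
    {z | (Finset.univ.filter fun j => z j < z i).card < k} with hA
  have hAmeas : ∀ i, MeasurableSet (A i) := by
    intro i
    have hcard : Measurable fun z : Fin (n+1) → ℝ =>
        (Finset.univ.filter fun j => z j < z i).card := by
      simp only [Finset.card_filter]
      apply Finset.measurable_sum
      intro j _
      exact Measurable.ite (measurableSet_lt (measurable_pi_apply j) (measurable_pi_apply i))
        measurable_const measurable_const
    exact hcard (measurableSet_lt measurable_id measurable_const
      : MeasurableSet {m : ℕ | m < k})
  set E : Fin (n+1) → Set Ω := fun i => Y ⁻¹' A i with hE
  have hEmeas : ∀ i, MeasurableSet (E i) := fun i => hY (hAmeas i)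
  -- exchangeability: all μ (E i) are equal
  have hEeq : ∀ i, μ (E i) = μ (E (Fin.last n)) := by
    intro i
    set π := Equiv.swap i (Fin.last n) with hπ
    have hg : Measurable fun ω => (fun j => Y ω (π j)) :=
      measurable_pi_lambda _ fun j => (measurable_pi_apply (π j)).comp hY
    have h1 := congrArg (fun ν => ν (A (Fin.last n))) (hexch π)
    simp only [Measure.map_apply hg (hAmeas _), Measure.map_apply hY (hAmeas _)] at h1
    rw [← h1]
    congr 1
    ext ω
    simp only [Set.mem_preimage, hA, Set.mem_setOf_eq, hE]
    have hπlast : π (Fin.last n) = i := Equiv.swap_apply_right _ _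
    rw [card_filter_perm π (fun j => Y ω j < Y ω (π (Fin.last n))), hπlast]
  -- pointwise counting bound
  have hpoint : ∀ ω, (k : ℝ≥0∞) ≤ ∑ i, (E i).indicator (fun _ => (1:ℝ≥0∞)) ω := by
    intro ω
    have := lemD (Y ω) k hk1 (by omega)
    calc (k : ℝ≥0∞) ≤ ((Finset.univ.filter fun i =>
          (Finset.univ.filter fun j => Y ω j < Y ω i).card < k).card : ℝ≥0∞) := by
          exact_mod_cast this
      _ = ∑ i, (E i).indicator (fun _ => (1:ℝ≥0∞)) ω := by
          rw [← Finset.sum_boole]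
          congr 1
          ext i
          simp [hE, hA, Set.indicator_apply]
  -- integrate
  have hsum : (k : ℝ≥0∞) ≤ ∑ i, μ (E i) := by
    have h1 : ∑ i, μ (E i) = ∫⁻ ω, ∑ i, (E i).indicator (fun _ => (1:ℝ≥0∞)) ω ∂μ := by
      rw [lintegral_finset_sum]
      · exact Finset.sum_congr rfl fun i _ => (lintegral_indicator_one (hEmeas i)).symm
      · exact fun i _ => (measurable_const.indicator (hEmeas i))
    rw [h1]
    calc (k : ℝ≥0∞) = ∫⁻ _, (k : ℝ≥0∞) ∂μ := by simp
      _ ≤ _ := lintegral_mono fun ω => hpoint ω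
  have hconst : ∑ i, μ (E i) = (n+1) * μ (E (Fin.last n)) := by
    rw [Finset.sum_congr rfl fun i _ => hEeq i]
    simp [Finset.card_univ, mul_comm]
  -- μ (E last) ≥ k / (n+1)
  have hmain : (k : ℝ≥0∞) / (n+1) ≤ μ (E (Fin.last n)) := by
    have hb0 : ((n:ℝ≥0∞)+1) ≠ 0 := by
      have : (1:ℝ≥0∞) ≤ (n:ℝ≥0∞)+1 := le_add_self
      intro h; rw [h] at this; exact (not_le.mpr zero_lt_one) this
    have hbt : ((n:ℝ≥0∞)+1) ≠ ⊤ := by finiteness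
    rw [ENNReal.div_le_iff_le_mul (Or.inl hb0) (Or.inl hbt)]
    rw [hconst] at hsum
    calc (k:ℝ≥0∞) ≤ (n+1) * μ (E (Fin.last n)) := hsum
      _ = μ (E (Fin.last n)) * (n+1) := mul_comm _ _
  -- E last ⊆ target
  have hsub : E (Fin.last n) ⊆ {ω | Y ω (Fin.last n)
      ≤ orderStat (fun i : Fin n => Y ω (Fin.castSucc i)) k} := by
    intro ω hω
    simp only [hE, hA, Set.mem_preimage, Set.mem_setOf_eq] at hω ⊢
    apply lemA _ _ k hk1 hkn
    rw [← card_filter_castSucc (fun j => Y ω j < Y ω (Fin.last n)) (by simp)]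
    exact hω
  have hle : (k : ℝ≥0∞) / (n+1) ≤ μ {ω | Y ω (Fin.last n)
      ≤ orderStat (fun i : Fin n => Y ω (Fin.castSucc i)) k} :=
    le_trans hmain (measure_mono hsub)
  -- convert to reals
  have htop : μ {ω | Y ω (Fin.last n)
      ≤ orderStat (fun i : Fin n => Y ω (Fin.castSucc i)) k} ≠ ⊤ := measure_ne_top _ _
  have h2 := ENNReal.toReal_mono htop hle
  have h3 : ((k : ℝ≥0∞) / (n+1)).toReal = (k : ℝ) / (n+1) := by
    have hcast : ((n:ℝ≥0∞)+1) = ((n+1 : ℕ) : ℝ≥0∞) := by push_cast; ring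
    rw [hcast, ENNReal.toReal_div]
    simp only [ENNReal.toReal_natCast]
    push_cast
    ring
  rw [h3] at h2
  refine le_trans ?_ h2
  rw [le_div_iff₀ (by positivity)]
  have hceil : ((n : ℝ) + 1) * (1 - α) ≤ k := by
    rw [hk]; exact Nat.le_ceil _
  linarith
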